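/- Let m ≥ 1 be an integer, a, b ∈ ℝ, and t ∈ ℝ. Then cosh(t/4) · (4 sinh²(t/(2m)) + 4a)^m · (4 sinh²(t/(2m)) + 4b)^m = Σ_{j=0}^{m} Σ_{l=0}^{m} d_{m,j,l} · 4 cosh(t/4) cosh(jt/m) cosh(lt/m), where d_{m,j,l} = 4^{2m−1} Σ_{k=j}^{m} Σ_{n=l}^{m} C(m,k) C(m,n) a^{m−k} b^{m−n} a_{k,j} a_{n,l}, with a_{0,0} := 1 and, for k ≥ 1, a_{k,0} = (−1)^k 2^{−2k} C(2k,k), a_{k,k} = 2^{1−2k}, and a_{k,j} = (−1)^{k−j} 2^{1−2k} C(2k, k−j) for 0 < j < k. -/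

import Mathlib

/-- The coefficients `a_{k,j}` in the expansion of `sinh^{2k}` as a finite cosh-series,
with `a_{0,0} = 1`. -/
noncomputable def acoef (k j : ℕ) : ℝ :=
  if j = 0 then (-1 : ℝ) ^ k * (2 : ℝ) ^ (-(2 * k : ℤ)) * (Nat.choose (2 * k) k : ℝ)
  else (-1 : ℝ) ^ (k - j) * (2 : ℝ) ^ ((1 : ℤ) - 2 * k) * (Nat.choose (2 * k) (k - j) : ℝ)

/-- The coefficients
`d_{m,j,l} = 4^{2m−1} ∑_{k=j}^{m} ∑_{n=l}^{m} C(m,k) C(m,n) a^{m−k} b^{m−n} a_{k,j} a_{n,l}`. -/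
noncomputable def dcoef (m : ℕ) (a b : ℝ) (j l : ℕ) : ℝ :=
  (4 : ℝ) ^ (2 * m - 1) *
    ∑ k ∈ Finset.Icc j m, ∑ n ∈ Finset.Icc l m,
      (Nat.choose m k : ℝ) * (Nat.choose m n : ℝ) * a ^ (m - k) * b ^ (m - n) *
        acoef k j * acoef n l

lemma two_zpow_neg (k : ℕ) : (2:ℝ) ^ (-(2 * k : ℤ)) = ((2:ℝ)^(2*k))⁻¹ := by
  rw [show (-(2 * k : ℤ)) = -((2*k : ℕ) : ℤ) by push_cast; ring, zpow_neg, zpow_natCast]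

lemma two_zpow_one_sub (k : ℕ) : (2:ℝ) ^ ((1:ℤ) - 2 * k) = 2 * ((2:ℝ)^(2*k))⁻¹ := by
  rw [show ((1:ℤ) - 2 * k) = 1 + -((2*k : ℕ) : ℤ) by push_cast; ring,
    zpow_add₀ (two_ne_zero), zpow_one, zpow_neg, zpow_natCast]

lemma lemA (k : ℕ) (c : ℝ) :
    (c^2 - 1)^(2*k) =
      ∑ j ∈ Finset.range (k+1),
        acoef k j * (c^(2*(k+j)) + c^(2*(k-j))) * 2^(2*k) / 2 := by
  set f : ℕ → ℝ := fun i => c^(2*i) * (-1:ℝ)^(2*k-i) * (Nat.choose (2*k) i : ℝ) with hf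
  have h2k : (0:ℝ) < 2^(2*k) := by positivity
  have hbin : (c^2 - 1)^(2*k) = ∑ i ∈ Finset.range (2*k+1), f i := by
    rw [sub_eq_add_neg, add_pow]
    refine Finset.sum_congr rfl fun i hi => ?_
    simp only [hf, ← pow_mul]
  -- split the sum
  have h1 : (∑ j ∈ Finset.range (k+1), f (k - j)) = ∑ j ∈ Finset.range (k+1), f j := by
    rw [← Finset.sum_range_reflect f (k+1)]
    exact Finset.sum_congr rfl fun j hj => by congr 1
  have h2 : (∑ i ∈ Finset.Ico k (2*k+1), f i) = ∑ j ∈ Finset.range (k+1), f (k + j) := by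
    rw [Finset.sum_Ico_eq_sum_range, show 2*k+1-k = k+1 from by omega]
  have h3 : (∑ i ∈ Finset.range k, f i) + ∑ i ∈ Finset.Ico k (2*k+1), f i
      = ∑ i ∈ Finset.range (2*k+1), f i := by
    rw [Finset.range_eq_Ico]
    exact (Finset.sum_Ico_consecutive f (Nat.zero_le k) (by omega : k ≤ 2*k+1)).trans (by rw [Finset.range_eq_Ico])
  have hsplit : (∑ i ∈ Finset.range (2*k+1), f i)
      = (∑ j ∈ Finset.range (k+1), f (k - j)) + (∑ j ∈ Finset.range (k+1), f (k + j)) - f k := by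
    rw [h1, ← h2, Finset.sum_range_succ f k, ← h3]
    ring
  rw [hbin, hsplit]
  -- now split off j = 0 on both sides and compare termwise
  rw [Finset.sum_range_succ' (fun j => acoef k j * (c^(2*(k+j)) + c^(2*(k-j))) * 2^(2*k) / 2) k,
    Finset.sum_range_succ' (fun j => f (k - j)) k, Finset.sum_range_succ' (fun j => f (k + j)) k]
  have hT0 : acoef k 0 * (c^(2*(k+0)) + c^(2*(k-0))) * 2^(2*k) / 2 = f k := by
    simp only [acoef, if_pos rfl, if_true, hf, two_zpow_neg, Nat.add_zero, Nat.sub_zero]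
    rw [show 2*k - k = k by omega]
    field_simp
    ring
  have hT : ∀ j ∈ Finset.range k,
      acoef k (j+1) * (c^(2*(k+(j+1))) + c^(2*(k-(j+1)))) * 2^(2*k) / 2
        = f (k - (j+1)) + f (k + (j+1)) := by
    intro j hj
    have hjk : j + 1 ≤ k := by simpa using Finset.mem_range.mp hj
    simp only [acoef, if_neg (Nat.succ_ne_zero j), hf, two_zpow_one_sub]
    rw [show 2*k - (k - (j+1)) = (k - (j+1)) + 2*(j+1) by omega, pow_add,
      show 2*k - (k + (j+1)) = k - (j+1) by omega,
      show Nat.choose (2*k) (k + (j+1)) = Nat.choose (2*k) (k - (j+1)) by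
        rw [show k - (j+1) = 2*k - (k + (j+1)) by omega]
        exact (Nat.choose_symm (show k + (j+1) ≤ 2*k by omega)).symm]
    rw [show ((-1:ℝ))^(2*(j+1)) = 1 from by simp [pow_mul], mul_one]
    field_simp
    ring
  rw [Finset.sum_congr rfl hT, hT0]
  simp only [Nat.sub_zero, Nat.add_zero, Finset.sum_add_distrib]
  ring

lemma lemB (k : ℕ) (x : ℝ) :
    Real.sinh x ^ (2*k) = ∑ j ∈ Finset.range (k+1), acoef k j * Real.cosh (2*(j:ℝ)*x) := by
  have hc : (0:ℝ) < Real.exp x := Real.exp_pos x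
  set c := Real.exp x with hcdef
  have hc0 : c ≠ 0 := ne_of_gt hc
  have hpow : ((2:ℝ)*c)^(2*k) ≠ 0 := by positivity
  have hs : Real.sinh x * (2*c) = c^2 - 1 := by
    rw [Real.sinh_eq, Real.exp_neg, ← hcdef]
    field_simp
  have hcosh : ∀ j : ℕ, Real.cosh (2*(j:ℝ)*x) = (c^(2*j) + (c^(2*j))⁻¹)/2 := by
    intro j
    rw [Real.cosh_eq, show (2*(j:ℝ)*x) = ((2*j : ℕ):ℝ)*x by push_cast; ring, Real.exp_neg,
      Real.exp_nat_mul, ← hcdef]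
  apply mul_right_cancel₀ hpow
  rw [← mul_pow, hs, lemA k c, Finset.sum_mul]
  refine Finset.sum_congr rfl fun j hj => ?_
  have hjk : j ≤ k := by
    have := Finset.mem_range.mp hj; omega
  rw [hcosh j, mul_pow]
  have h1 : c^(2*(k+j)) = c^(2*k) * c^(2*j) := by rw [← pow_add]; congr 1; omega
  have h2 : c^(2*k) = c^(2*(k-j)) * c^(2*j) := by rw [← pow_add]; congr 1; omega
  have hcj : (c:ℝ)^(2*j) ≠ 0 := pow_ne_zero _ hc0
  rw [h1]
  field_simp
  rw [h2]
  ring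

/-- **Lemma 9 of the paper.** For `m ≥ 1`, `a b t : ℝ`,
`cosh(t/4) (4 sinh²(t/(2m)) + 4a)^m (4 sinh²(t/(2m)) + 4b)^m
  = ∑_{j=0}^{m} ∑_{l=0}^{m} d_{m,j,l} · 4 cosh(t/4) cosh(jt/m) cosh(lt/m)`. -/
theorem cosh_expansion_j (m : ℕ) (hm : 1 ≤ m) (a b t : ℝ) :
    Real.cosh (t / 4) * (4 * Real.sinh (t / (2 * m)) ^ 2 + 4 * a) ^ m *
        (4 * Real.sinh (t / (2 * m)) ^ 2 + 4 * b) ^ m =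
      ∑ j ∈ Finset.range (m + 1), ∑ l ∈ Finset.range (m + 1),
        dcoef m a b j l *
          (4 * Real.cosh (t / 4) * Real.cosh (j * t / m) * Real.cosh (l * t / m)) := by
  have hm0 : (m:ℝ) ≠ 0 := by positivity
  set s : ℝ := t / (2 * m) with hsdef
  have hcosh : ∀ j : ℕ, Real.cosh (2*(j:ℝ)*s) = Real.cosh ((j:ℝ) * t / m) := by
    intro j
    congr 1
    rw [hsdef]
    field_simp
  -- expansion of each factor
  have key : ∀ y : ℝ, (4 * Real.sinh s ^ 2 + 4 * y) ^ m
      = 4^m * ∑ j ∈ Finset.range (m+1),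
          (∑ k ∈ Finset.Icc j m, (Nat.choose m k : ℝ) * y^(m-k) * acoef k j) *
            Real.cosh ((j:ℝ) * t / m) := by
    intro y
    rw [add_pow]
    have step1 : ∀ k ∈ Finset.range (m+1),
        (4 * Real.sinh s ^ 2)^k * (4*y)^(m-k) * (Nat.choose m k : ℝ)
          = ∑ j ∈ Finset.range (k+1),
              4^m * ((Nat.choose m k : ℝ) * y^(m-k) * acoef k j) * Real.cosh ((j:ℝ) * t / m) := by
      intro k hk
      have hkm : k ≤ m := by have := Finset.mem_range.mp hk; omega
      have h4 : (4:ℝ)^k * 4^(m-k) = 4^m := by rw [← pow_add]; congr 1; omega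
      have hsinh : (Real.sinh s ^ 2)^k = Real.sinh s ^ (2*k) := by
        rw [← pow_mul]
      rw [mul_pow, mul_pow, hsinh, lemB k s]
      rw [Finset.mul_sum, Finset.sum_mul, Finset.sum_mul]
      refine Finset.sum_congr rfl fun j hj => ?_
      rw [hcosh j]
      rw [← h4]
      ring
    rw [Finset.sum_congr rfl step1]
    rw [Finset.sum_comm' (t' := Finset.range (m+1)) (s' := fun j => Finset.Icc j m)
      (by intro k j; simp only [Finset.mem_range, Finset.mem_Icc]; omega)]
    rw [Finset.mul_sum]
    refine Finset.sum_congr rfl fun j hj => ?_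
    rw [Finset.sum_mul, Finset.mul_sum]
    refine Finset.sum_congr rfl fun k hk => ?_
    ring
  have hd : ∀ j l : ℕ, dcoef m a b j l
      = 4^(2*m-1) * ((∑ k ∈ Finset.Icc j m, (Nat.choose m k : ℝ) * a^(m-k) * acoef k j)
          * (∑ n ∈ Finset.Icc l m, (Nat.choose m n : ℝ) * b^(m-n) * acoef n l)) := by
    intro j l
    simp only [dcoef, Finset.sum_mul_sum]
    congr 1
    exact Finset.sum_congr rfl fun k _ => Finset.sum_congr rfl fun n _ => by ring
  have h4 : (4:ℝ)^(2*m-1) * 4 = 4^m * 4^m := by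
    rw [← pow_succ, ← pow_add]
    congr 1
    omega
  rw [key a, key b]
  set SA := ∑ j ∈ Finset.range (m+1),
      (∑ k ∈ Finset.Icc j m, (Nat.choose m k : ℝ) * a^(m-k) * acoef k j)
        * Real.cosh ((j:ℝ) * t / m) with hSA
  set SB := ∑ l ∈ Finset.range (m+1),
      (∑ n ∈ Finset.Icc l m, (Nat.choose m n : ℝ) * b^(m-n) * acoef n l)
        * Real.cosh ((l:ℝ) * t / m) with hSB
  rw [show Real.cosh (t/4) * (4^m * SA) * (4^m * SB)
      = ((4:ℝ)^m * 4^m * Real.cosh (t/4)) * (SA * SB) from by ring, hSA, hSB,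
    Finset.sum_mul_sum, Finset.mul_sum]
  refine Finset.sum_congr rfl fun j hj => ?_
  rw [Finset.mul_sum]
  refine Finset.sum_congr rfl fun l hl => ?_
  rw [hd j l, ← h4]
  ring
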